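/- Comparison with the Balazs–Voros quantization: for 0 ≤ n, m < N, if n is even then 𝖡_{nm} = 𝖡𝖵_{nm}, while if n is odd then 𝖡_{nm} = e^{iπζ/N} · 𝖡𝖵_{nm}, where ζ = n − 2m when 0 ≤ m < N/2 and ζ = n − 2(m − N/2) when N/2 ≤ m < N. -/

import Mathlib

noncomputable section

noncomputable section

/-- Entry of the `M × M` discrete Fourier transform matrix: `M^{-1/2} e^{-2πiab/M}`. -/
def dftEntry (M a b : ℕ) : ℂ :=
  ((Real.sqrt M : ℝ) : ℂ)⁻¹ * Complex.exp (-(2 * Real.pi * Complex.I * a * b) / M)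

/-- The `N × N` discrete Fourier transform matrix `(𝓕^N)_{mn} = N^{-1/2} e^{-2πimn/N}`. -/
def dftMatrix (N : ℕ) : Matrix (Fin N) (Fin N) ℂ :=
  Matrix.of fun m n : Fin N => dftEntry N m n

/-- The diagonal phase matrix `Z` with `Z_{nn} = e^{iπn/N}`. -/
def Zmat (N : ℕ) : Matrix (Fin N) (Fin N) ℂ :=
  Matrix.diagonal fun n : Fin N => Complex.exp (Real.pi * Complex.I * (n : ℕ) / N)

/-- The block-diagonal matrix `D` with upper-left block `𝓕^{N/2}` and lower-right block
`−𝓕^{N/2}`. -/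
def Dmat (N : ℕ) : Matrix (Fin N) (Fin N) ℂ :=
  Matrix.of fun m n : Fin N =>
    if (m : ℕ) < N / 2 ∧ (n : ℕ) < N / 2 then dftEntry (N / 2) m n
    else if N / 2 ≤ (m : ℕ) ∧ N / 2 ≤ (n : ℕ) then
      -dftEntry (N / 2) ((m : ℕ) - N / 2) ((n : ℕ) - N / 2)
    else 0

/-- The quantum baker matrix `𝖡 = Z (𝓕^N)⁻¹ D Z⁻²`. -/
def bakerMatrix (N : ℕ) : Matrix (Fin N) (Fin N) ℂ :=
  Zmat N * (dftMatrix N)⁻¹ * Dmat N * (Zmat N ^ 2)⁻¹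

/-- The block-diagonal matrix `D₊` with both diagonal blocks equal to `𝓕^{N/2}`. -/
def DplusMat (N : ℕ) : Matrix (Fin N) (Fin N) ℂ :=
  Matrix.of fun m n : Fin N =>
    if (m : ℕ) < N / 2 ∧ (n : ℕ) < N / 2 then dftEntry (N / 2) m n
    else if N / 2 ≤ (m : ℕ) ∧ N / 2 ≤ (n : ℕ) then
      dftEntry (N / 2) ((m : ℕ) - N / 2) ((n : ℕ) - N / 2)
    else 0

/-- The Balazs–Voros matrix `𝖡𝖵 = (𝓕^N)⁻¹ D₊`. -/
def balazsVorosMatrix (N : ℕ) : Matrix (Fin N) (Fin N) ℂ :=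
  (dftMatrix N)⁻¹ * DplusMat N

lemma int_zero_of (N t : ℤ) (hlt : |t| < N) (h : ∃ k : ℤ, (t:ℂ) = k * N) : t = 0 := by
  obtain ⟨k, hk⟩ := h
  have h2 : t = k * N := by exact_mod_cast hk
  exact Int.eq_zero_of_abs_lt_dvd ⟨k, by linarith [h2]⟩ hlt

lemma exp_ne_one (N : ℕ) (hN : 0 < N) (t : ℤ) (ht0 : t ≠ 0) (htlt : |t| < (N:ℤ)) :
    Complex.exp (2*Real.pi*Complex.I*t/N) ≠ 1 := by
  have hN0 : (N:ℂ) ≠ 0 := by exact_mod_cast hN.ne'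
  intro h
  rw [Complex.exp_eq_one_iff] at h
  obtain ⟨k, hk⟩ := h
  apply ht0
  apply int_zero_of N t htlt
  refine ⟨k, ?_⟩
  have hπ : (2*(Real.pi:ℂ)*Complex.I) ≠ 0 := by
    simp [Real.pi_ne_zero, Complex.I_ne_zero, Complex.ofReal_ne_zero]
  field_simp at hk
  -- hk should now be linear; rearrange
  have : (2*(Real.pi:ℂ)*Complex.I) * t = (2*(Real.pi:ℂ)*Complex.I) * (k * N) := by
    ring_nf
    ring_nf at hk
    linear_combination (2*(Real.pi:ℂ)*Complex.I) * hk
  exact mul_left_cancel₀ hπ this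

lemma sum_exp_vanish (N M : ℕ) (hNM : N = 2*M) (hM : 0 < M) (t : ℤ) (ht : Even t)
    (ht0 : t ≠ 0) (htlt : |t| < (N:ℤ)) :
    ∑ k ∈ Finset.range M, Complex.exp (2*Real.pi*Complex.I*k*t/N) = 0 := by
  have hN : 0 < N := by omega
  have hN0 : (N:ℂ) ≠ 0 := by exact_mod_cast hN.ne'
  set z := Complex.exp (2*Real.pi*Complex.I*t/N) with hz
  have hterm : ∀ k : ℕ, Complex.exp (2*Real.pi*Complex.I*k*t/N) = z ^ k := by
    intro k
    rw [hz, ← Complex.exp_nat_mul]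
    congr 1
    ring
  simp_rw [hterm]
  obtain ⟨u, hu⟩ := ht
  have hzM : z ^ M = 1 := by
    rw [hz, ← Complex.exp_nat_mul]
    have : (M:ℂ) * (2*Real.pi*Complex.I*t/N) = u * (2*Real.pi*Complex.I) := by
      have hM0 : (M:ℂ) ≠ 0 := by exact_mod_cast hM.ne'
      have htc : (t:ℂ) = 2*u := by exact_mod_cast hu ▸ (by push_cast; ring : ((u+u:ℤ):ℂ) = 2*u)
      have hNc : (N:ℂ) = 2*M := by exact_mod_cast hNM
      rw [htc, hNc]
      field_simp
    rw [this, Complex.exp_int_mul_two_pi_mul_I]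
  have hz1 : z ≠ 1 := exp_ne_one N hN t ht0 htlt
  rw [geom_sum_eq hz1, hzM]
  simp

lemma dftMatrix_inv (N : ℕ) (hN : 0 < N) :
    (dftMatrix N)⁻¹ = Matrix.of fun a b : Fin N =>
      ((Real.sqrt N : ℝ) : ℂ)⁻¹ * Complex.exp (2*Real.pi*Complex.I*a*b/N) := by
  have hN0 : (N:ℂ) ≠ 0 := by exact_mod_cast hN.ne'
  have hs : ((Real.sqrt N : ℝ):ℂ) * ((Real.sqrt N : ℝ):ℂ) = (N:ℂ) := by
    rw [← Complex.ofReal_mul, Real.mul_self_sqrt (Nat.cast_nonneg N)]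
    norm_num
  apply Matrix.inv_eq_right_inv
  ext a b
  rw [Matrix.mul_apply, Matrix.one_apply]
  have hterm : ∀ k : Fin N, dftMatrix N a k *
      (((Real.sqrt N : ℝ):ℂ)⁻¹ * Complex.exp (2*Real.pi*Complex.I*k*b/N)) =
      (N:ℂ)⁻¹ * Complex.exp (2*Real.pi*Complex.I*(((b:ℤ)-(a:ℤ) : ℤ) : ℂ)/N) ^ (k:ℕ) := by
    intro k
    rw [dftMatrix, Matrix.of_apply, dftEntry, ← Complex.exp_nat_mul]
    rw [mul_mul_mul_comm, ← Complex.exp_add]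
    congr 1
    · rw [← mul_inv, hs]
    · congr 1
      push_cast
      field_simp
      ring
  simp_rw [Matrix.of_apply, hterm, ← Finset.mul_sum]
  rw [Fin.sum_univ_eq_sum_range
    (fun k => Complex.exp (2*Real.pi*Complex.I*(((b:ℤ)-(a:ℤ) : ℤ) : ℂ)/N) ^ k)]
  by_cases hab : a = b
  · subst hab
    rw [if_pos rfl, sub_self]
    simp only [Int.cast_zero, mul_zero, zero_div, Complex.exp_zero, one_pow, Finset.sum_const,
      Finset.card_range, nsmul_eq_mul, mul_one]
    exact inv_mul_cancel₀ hN0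
  · rw [if_neg hab]
    have hz1 : Complex.exp (2*Real.pi*Complex.I*(((b:ℤ)-(a:ℤ) : ℤ) : ℂ)/N) ≠ 1 := by
      apply exp_ne_one N hN
      · intro h
        exact hab (Fin.ext (by omega))
      · rw [abs_lt]
        have := a.isLt; have := b.isLt
        omega
    have hzN : Complex.exp (2*Real.pi*Complex.I*(((b:ℤ)-(a:ℤ) : ℤ) : ℂ)/N) ^ N = 1 := by
      rw [← Complex.exp_nat_mul]
      have h9 : (N:ℂ) * (2*Real.pi*Complex.I*(((b:ℤ)-(a:ℤ) : ℤ) : ℂ)/N)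
          = (((b:ℤ)-(a:ℤ) : ℤ) : ℂ) * (2*Real.pi*Complex.I) := by
        field_simp
      rw [h9, Complex.exp_int_mul_two_pi_mul_I]
    rw [geom_sum_eq hz1, hzN]
    simp

lemma bv_left_eq_zero (N M : ℕ) (hNM : N = 2*M) (hM : 0 < M) (n m : Fin N)
    (hm : (m:ℕ) < M) (hn : Even (n:ℕ)) (hne : (n:ℤ) ≠ 2*(m:ℕ)) :
    balazsVorosMatrix N n m = 0 := by
  have hN : 0 < N := by omega
  have hN2 : N/2 = M := by omega
  have hN0 : (N:ℂ) ≠ 0 := by exact_mod_cast hN.ne'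
  have hM0 : (M:ℂ) ≠ 0 := by exact_mod_cast hM.ne'
  set t : ℤ := (n:ℤ) - 2*(m:ℕ) with hti
  set C : ℂ := ((Real.sqrt N : ℝ):ℂ)⁻¹ * ((Real.sqrt M : ℝ):ℂ)⁻¹ with hC
  rw [balazsVorosMatrix, Matrix.mul_apply, dftMatrix_inv N hN]
  have hterm : ∀ k : Fin N,
      (Matrix.of fun a b : Fin N =>
        ((Real.sqrt N : ℝ) : ℂ)⁻¹ * Complex.exp (2*Real.pi*Complex.I*a*b/N)) n k *
        DplusMat N k m
      = if (k:ℕ) < M then C * Complex.exp (2*Real.pi*Complex.I*(k:ℕ)*(t:ℂ)/N) else 0 := by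
    intro k
    rw [Matrix.of_apply, DplusMat, Matrix.of_apply, hN2]
    by_cases hk : (k:ℕ) < M
    · rw [if_pos ⟨hk, hm⟩, if_pos hk, dftEntry, hC]
      rw [mul_mul_mul_comm, ← Complex.exp_add]
      congr 2
      rw [hti]
      have hNc : (N:ℂ) = 2*(M:ℂ) := by exact_mod_cast hNM
      push_cast
      rw [hNc]
      field_simp
      ring
    · rw [if_neg (by tauto), if_neg (by omega), if_neg hk, mul_zero]
  simp_rw [hterm]
  rw [Fin.sum_univ_eq_sum_range (fun k => if k < M then C * Complex.exp (2*Real.pi*Complex.I*(k:ℕ)*(t:ℂ)/N) else 0)]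
  rw [← Finset.sum_subset (Finset.range_subset_range.2 (by omega : M ≤ N))
    (fun x _ hx => if_neg (by simpa using hx))]
  rw [Finset.sum_congr rfl (fun x hx => if_pos (Finset.mem_range.1 hx)), ← Finset.mul_sum]
  rw [sum_exp_vanish N M hNM hM t ?_ ?_ ?_, mul_zero]
  · rw [hti, Int.even_sub]
    constructor <;> intro
    · exact even_two_mul _
    · exact_mod_cast hn
  · rw [hti]; omega
  · rw [hti, abs_lt]
    have := n.isLt
    omega

lemma bv_right_eq_zero (N M : ℕ) (hNM : N = 2*M) (hM : 0 < M) (n m : Fin N)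
    (hm : M ≤ (m:ℕ)) (hn : Even (n:ℕ)) (hne : (n:ℤ) ≠ 2*((m:ℕ) - M : ℕ)) :
    balazsVorosMatrix N n m = 0 := by
  have hN : 0 < N := by omega
  have hN2 : N/2 = M := by omega
  have hN0 : (N:ℂ) ≠ 0 := by exact_mod_cast hN.ne'
  have hM0 : (M:ℂ) ≠ 0 := by exact_mod_cast hM.ne'
  have hNc : (N:ℂ) = 2*(M:ℂ) := by exact_mod_cast hNM
  obtain ⟨u, hu⟩ := hn
  set t : ℤ := (n:ℤ) - 2*((m:ℕ) - M : ℕ) with hti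
  set C : ℂ := ((Real.sqrt N : ℝ):ℂ)⁻¹ * ((Real.sqrt M : ℝ):ℂ)⁻¹ with hC
  rw [balazsVorosMatrix, Matrix.mul_apply, dftMatrix_inv N hN]
  have hterm : ∀ k : Fin N,
      (Matrix.of fun a b : Fin N =>
        ((Real.sqrt N : ℝ) : ℂ)⁻¹ * Complex.exp (2*Real.pi*Complex.I*a*b/N)) n k *
        DplusMat N k m
      = if M ≤ (k:ℕ) then
          C * Complex.exp (2*Real.pi*Complex.I*((k:ℕ)-M : ℕ)*(t:ℂ)/N +
            (u:ℂ)*(2*Real.pi*Complex.I)) else 0 := by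
    intro k
    rw [Matrix.of_apply, DplusMat, Matrix.of_apply, hN2]
    by_cases hk : M ≤ (k:ℕ)
    · rw [if_neg (by omega), if_pos ⟨hk, hm⟩, if_pos hk, dftEntry, hC]
      rw [mul_mul_mul_comm, ← Complex.exp_add]
      congr 2
      rw [hti]
      have hkc : ((k:ℕ):ℂ) = (((k:ℕ)-M : ℕ):ℂ) + M := by
        push_cast [Nat.cast_sub hk]; ring
      have hnc : ((n:ℕ):ℂ) = 2*(u:ℂ) := by exact_mod_cast hu ▸ (by push_cast; ring : ((u+u:ℕ):ℂ) = 2*(u:ℂ))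
      rw [hkc]
      push_cast [Nat.cast_sub hk, Nat.cast_sub hm]
      rw [hNc, hnc]
      field_simp
      ring
    · rw [if_neg (by omega), if_neg (by tauto), if_neg hk, mul_zero]
  simp_rw [hterm]
  rw [Fin.sum_univ_eq_sum_range (fun k => if M ≤ k then
      C * Complex.exp (2*Real.pi*Complex.I*((k:ℕ)-M : ℕ)*(t:ℂ)/N +
        (u:ℂ)*(2*Real.pi*Complex.I)) else 0)]
  rw [Finset.range_eq_Ico, ← Finset.sum_Ico_consecutive _ (Nat.zero_le M) (by omega : M ≤ N)]
  rw [← Finset.range_eq_Ico]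
  have h1 : ∑ k ∈ Finset.range M, (if M ≤ k then
      C * Complex.exp (2*Real.pi*Complex.I*((k:ℕ)-M : ℕ)*(t:ℂ)/N +
        (u:ℂ)*(2*Real.pi*Complex.I)) else 0) = 0 := by
    apply Finset.sum_eq_zero
    intro x hx
    exact if_neg (by simp at hx; omega)
  rw [h1, zero_add, Finset.sum_Ico_eq_sum_range]
  have h2 : N - M = M := by omega
  rw [h2]
  have h3 : ∀ j ∈ Finset.range M, (if M ≤ M + j then
      C * Complex.exp (2*Real.pi*Complex.I*((M + j)-M : ℕ)*(t:ℂ)/N +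
        (u:ℂ)*(2*Real.pi*Complex.I)) else 0)
      = C * Complex.exp (2*Real.pi*Complex.I*(j:ℕ)*(t:ℂ)/N) := by
    intro j _
    have hu1 : Complex.exp ((u:ℂ)*(2*Real.pi*Complex.I)) = 1 := by
      have := Complex.exp_int_mul_two_pi_mul_I (u:ℤ)
      rwa [Int.cast_natCast] at this
    rw [if_pos (Nat.le_add_right M j), Nat.add_sub_cancel_left, Complex.exp_add, hu1, mul_one]
  rw [Finset.sum_congr rfl h3, ← Finset.mul_sum]
  rw [sum_exp_vanish N M hNM hM t ?_ ?_ ?_, mul_zero]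
  · rw [hti, Int.even_sub]
    constructor <;> intro
    · exact even_two_mul _
    · exact ⟨u, by exact_mod_cast hu⟩
  · rw [hti]; omega
  · rw [hti, abs_lt]
    have := n.isLt
    omega

lemma baker_eq_phase_mul_bv (N : ℕ) (hN : 0 < N) (n m : Fin N) :
    bakerMatrix N n m = Complex.exp (Real.pi * Complex.I * (n:ℕ) / N) *
      Complex.exp (-(2*Real.pi*Complex.I*(m:ℕ))/N) *
      (if (m:ℕ) < N/2 then 1 else -1) * balazsVorosMatrix N n m := by
  rw [bakerMatrix, balazsVorosMatrix]
  have hz2 : (Zmat N ^ 2)⁻¹ = Matrix.diagonal (fun k : Fin N =>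
      Complex.exp (-(2*Real.pi*Complex.I*(k:ℕ))/N)) := by
    apply Matrix.inv_eq_right_inv
    rw [Zmat, sq, Matrix.diagonal_mul_diagonal, Matrix.diagonal_mul_diagonal,
      ← Matrix.diagonal_one]
    refine congrArg Matrix.diagonal ?_
    funext k
    show Complex.exp _ * Complex.exp _ * Complex.exp _ = 1
    rw [← Complex.exp_add, ← Complex.exp_add]
    have h0 : Real.pi * Complex.I * ((k:ℕ):ℂ) / N + Real.pi * Complex.I * ((k:ℕ):ℂ) / N +
        -(2*Real.pi*Complex.I*((k:ℕ):ℂ))/N = 0 := by ring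
    rw [h0, Complex.exp_zero]
  rw [hz2, Matrix.mul_diagonal, Matrix.mul_assoc (Zmat N), Zmat, Matrix.diagonal_mul]
  have key : ((dftMatrix N)⁻¹ * Dmat N) n m
      = (if (m:ℕ) < N/2 then 1 else -1) * (((dftMatrix N)⁻¹ * DplusMat N) n m) := by
    rw [Matrix.mul_apply, Matrix.mul_apply, Finset.mul_sum]
    apply Finset.sum_congr rfl
    intro k _
    by_cases hm : (m:ℕ) < N/2
    · rw [if_pos hm, one_mul]
      congr 1
      simp only [Dmat, DplusMat, Matrix.of_apply]
      split_ifs with h1 h2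
      · rfl
      · exact absurd h2.2 (by omega)
      · rfl
    · rw [if_neg hm]
      have hD : Dmat N k m = -(DplusMat N k m) := by
        simp only [Dmat, DplusMat, Matrix.of_apply]
        split_ifs with h1 h2
        · exact absurd h1.2 (by omega)
        · rfl
        · exact neg_zero.symm
      rw [hD]
      ring
  rw [key]
  ring

/-- Comparison with the Balazs–Voros quantization: even rows agree, while odd rows differ
by the phase `e^{iπζ/N}`, where `ζ = n − 2m` for `0 ≤ m < N/2` and `ζ = n − 2(m − N/2)`
for `N/2 ≤ m < N`. -/
theorem bakerMatrix_eq_balazsVoros_upto_phase (N : ℕ) (hN : 0 < N) (hNeven : Even N)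
    (n m : Fin N) :
    (Even (n : ℕ) → bakerMatrix N n m = balazsVorosMatrix N n m) ∧
      (Odd (n : ℕ) →
        bakerMatrix N n m =
          Complex.exp (Real.pi * Complex.I *
              (((if (m : ℕ) < N / 2 then (n : ℤ) - 2 * (m : ℕ)
                 else (n : ℤ) - 2 * ((m : ℕ) - (N / 2 : ℕ))) : ℤ) : ℂ) / N) *
            balazsVorosMatrix N n m) := by
  obtain ⟨M, hNM⟩ := hNeven
  have hNM : N = 2*M := by omega
  have hM : 0 < M := by omega
  have hN2 : N/2 = M := by omega
  have hN0 : (N:ℂ) ≠ 0 := by exact_mod_cast hN.ne'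
  have hNc : (N:ℂ) = 2*(M:ℂ) := by exact_mod_cast hNM
  have hM0 : (M:ℂ) ≠ 0 := by exact_mod_cast hM.ne'
  rw [baker_eq_phase_mul_bv N hN n m, hN2]
  constructor
  · intro hn
    by_cases hm : (m:ℕ) < M
    · rw [if_pos hm, mul_one]
      by_cases ht : (n:ℤ) = 2*(m:ℕ)
      · have hphase : Complex.exp (Real.pi * Complex.I * (n:ℕ) / N) *
            Complex.exp (-(2*Real.pi*Complex.I*(m:ℕ))/N) = 1 := by
          rw [← Complex.exp_add, ← Complex.exp_zero]
          congr 1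
          have hnc : ((n:ℕ):ℂ) = 2*((m:ℕ):ℂ) := by exact_mod_cast ht
          rw [hnc]
          field_simp
          ring
        rw [hphase, one_mul]
      · rw [bv_left_eq_zero N M hNM hM n m hm hn ht]
        simp
    · rw [if_neg hm]
      by_cases ht : (n:ℤ) = 2*((m:ℕ) - M : ℕ)
      · have hphase : Complex.exp (Real.pi * Complex.I * (n:ℕ) / N) *
            Complex.exp (-(2*Real.pi*Complex.I*(m:ℕ))/N) = -1 := by
          have hZ : (n:ℤ) = 2*((m:ℕ):ℤ) - 2*(M:ℤ) := by omega
          have hnc : ((n:ℕ):ℂ) = 2*((m:ℕ):ℂ) - 2*(M:ℂ) := by exact_mod_cast hZ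
          have harg : Real.pi * Complex.I * ((n:ℕ):ℂ)/N + -(2*Real.pi*Complex.I*((m:ℕ):ℂ))/N
              = -(Real.pi * Complex.I) := by
            rw [hnc, hNc]
            field_simp
            ring
          rw [← Complex.exp_add, harg, Complex.exp_neg, Complex.exp_pi_mul_I]
          norm_num
        rw [hphase]
        ring
      · rw [bv_right_eq_zero N M hNM hM n m (by omega) hn ht]
        ring
  · intro _
    by_cases hm : (m:ℕ) < M
    · rw [if_pos hm, if_pos hm, mul_one]
      have hphase : Complex.exp (Real.pi * Complex.I * (n:ℕ) / N) *
          Complex.exp (-(2*Real.pi*Complex.I*(m:ℕ))/N)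
          = Complex.exp (Real.pi * Complex.I * ((((n:ℤ) - 2*(m:ℕ)):ℤ):ℂ) / N) := by
        rw [← Complex.exp_add]
        congr 1
        push_cast
        ring
      rw [hphase]
    · rw [if_neg hm, if_neg hm]
      have hphase : Complex.exp (Real.pi * Complex.I * (n:ℕ) / N) *
          Complex.exp (-(2*Real.pi*Complex.I*(m:ℕ))/N) * (-1)
          = Complex.exp (Real.pi * Complex.I * ((((n:ℤ) - 2*(((m:ℕ):ℤ)-(M:ℤ))):ℤ):ℂ) / N) := by
        have hneg : (-1 : ℂ) = Complex.exp (Real.pi * Complex.I * (N:ℂ) / N) := by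
          rw [mul_div_assoc, div_self hN0, mul_one, Complex.exp_pi_mul_I]
        rw [hneg, ← Complex.exp_add, ← Complex.exp_add]
        congr 1
        push_cast
        rw [hNc]
        field_simp
        ring
      rw [← hphase]

end
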